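/- Let X be a compact subset of ℂ not containing 0. If the set of polynomials in x is dense in C(X) (continuous complex-valued functions with the sup norm), then the set of polynomials in 1/x is also dense in C(X). -/

import Mathlib

open Polynomial Set Metric Bornology

lemma geom_inv_mem {A : Type*} [NormedCommRing A] [NormedAlgebra ℂ A] [CompleteSpace A]
    (B : Subalgebra ℂ A) (hB : IsClosed (B : Set A)) {x : A} (hx : x ∈ B) (hn : ‖x‖ < 1) :
    ∃ s ∈ B, (1 - x) * s = 1 := by
  refine ⟨∑' n : ℕ, x ^ n, ?_, mul_neg_geom_series x hn⟩
  have hsum : Summable fun n : ℕ => x ^ n := summable_geometric_of_norm_lt_one hn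
  exact hB.mem_of_tendsto hsum.hasSum.tendsto_sum_nat
    (Filter.Eventually.of_forall fun n => sum_mem fun i _ => pow_mem hx i)

lemma shift_inv_mem {A : Type*} [NormedCommRing A] [NormedAlgebra ℂ A] [CompleteSpace A]
    (B : Subalgebra ℂ A) (hB : IsClosed (B : Set A)) {g a c : A} (ha : a ∈ B) (hc : c ∈ B)
    (hga : g * a = 1) (h : ‖c * a‖ < 1) : ∃ s ∈ B, (g - c) * s = 1 := by
  obtain ⟨s, hs, hseq⟩ := geom_inv_mem B hB (mul_mem hc ha) h
  refine ⟨a * s, mul_mem ha hs, ?_⟩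
  calc (g - c) * (a * s) = (g * a - c * a) * s := by ring
  _ = (1 - c * a) * s := by rw [hga]
  _ = 1 := hseq

set_option maxHeartbeats 1600000 in
/-- If `X ⊆ ℂ` is compact with `0 ∉ X` and the polynomials in `x` are dense
in `C(X, ℂ)`, then the polynomials in `1/x` are dense in `C(X, ℂ)`. -/
theorem stmt0 (X : Set ℂ) (hX : IsCompact X) (h0 : (0 : ℂ) ∉ X)
    (hdense : Dense {f : C(X, ℂ) | ∃ p : Polynomial ℂ, ∀ z : X, f z = p.eval (z : ℂ)}) :
    Dense {f : C(X, ℂ) | ∃ p : Polynomial ℂ, ∀ z : X, f z = p.eval ((z : ℂ)⁻¹)} := by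
  haveI hCS : CompactSpace X := isCompact_iff_compactSpace.mp hX
  rcases X.eq_empty_or_nonempty with hXe | hXne
  · have huniv : {f : C(X, ℂ) | ∃ p : Polynomial ℂ, ∀ z : X, f z = p.eval ((z : ℂ)⁻¹)} = univ :=
      eq_univ_of_forall fun f => ⟨0, fun z => absurd z.2 (by simp [hXe])⟩
    rw [huniv]
    exact dense_univ
  have hz0 : ∀ z : X, (z : ℂ) ≠ 0 := fun z hz => h0 (hz ▸ z.2)
  obtain ⟨M0, hM0⟩ := isBounded_iff_forall_norm_le.mp hX.isBounded
  set M : ℝ := max M0 1 with hMdef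
  have hM1 : (1 : ℝ) ≤ M := le_max_right _ _
  have hMpos : (0 : ℝ) < M := lt_of_lt_of_le one_pos hM1
  have hMb : ∀ z ∈ X, ‖z‖ ≤ M := fun z hz => (hM0 z hz).trans (le_max_left _ _)
  set u : C(X, ℂ) := ⟨fun z => (z : ℂ)⁻¹, continuous_subtype_val.inv₀ hz0⟩ with hudef
  set A' : Subalgebra ℂ C(X, ℂ) := (Algebra.adjoin ℂ ({u} : Set C(X, ℂ))).topologicalClosure
    with hA'def
  have hA'closed : IsClosed (A' : Set C(X, ℂ)) := Subalgebra.isClosed_topologicalClosure _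
  have huA : u ∈ A' :=
    Subalgebra.le_topologicalClosure _ (Algebra.self_mem_adjoin_singleton ℂ u)
  have heval : ∀ (w : C(X, ℂ)) (p : Polynomial ℂ) (z : X), (aeval w p) z = p.eval (w z) := by
    intro w p z
    have h1 := Polynomial.aeval_algHom_apply (ContinuousMap.evalAlgHom ℂ ℂ z) w p
    simpa [Polynomial.coe_aeval_eq_eval] using h1.symm
  -- pointwise computation of inverses
  have hpt : ∀ (μ : ℂ) (a : C(X, ℂ)), (μ • u - 1) * a = 1 →
      ∀ z : X, (μ - (z : ℂ)) * a z = (z : ℂ) := by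
    intro μ a he z
    have h1 : ((μ • u - 1) * a) z = (1 : C(X, ℂ)) z := by rw [he]
    simp only [ContinuousMap.mul_apply, ContinuousMap.sub_apply, ContinuousMap.smul_apply,
      ContinuousMap.one_apply, smul_eq_mul, hudef, ContinuousMap.coe_mk] at h1
    have hz := hz0 z
    field_simp at h1
    linear_combination h1
  have hnorm : ∀ (μ : ℂ) (a : C(X, ℂ)), (μ • u - 1) * a = 1 →
      ∀ z : X, ‖a z‖ * ‖μ - (z : ℂ)‖ = ‖(z : ℂ)‖ := by
    intro μ a he z
    rw [← norm_mul, mul_comm, hpt μ a he z]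
  set R : Set ℂ := {μ | ∃ a ∈ A', (μ • u - 1) * a = 1} with hRdef
  have h0R : (0 : ℂ) ∈ R := ⟨-1, neg_mem (one_mem A'), by simp⟩
  -- R is open
  have hRopen : IsOpen R := by
    rw [Metric.isOpen_iff]
    rintro μ ⟨a, haA, hainv⟩
    refine ⟨(‖a‖ * ‖u‖ + 1)⁻¹, by positivity, fun μ' hμ' => ?_⟩
    have hc : (μ - μ') • u ∈ A' := A'.smul_mem huA _
    have hnc : ‖(μ - μ') • u * a‖ < 1 := by
      have h1 : ‖(μ - μ') • u * a‖ ≤ ‖μ - μ'‖ * ‖u‖ * ‖a‖ := by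
        calc ‖(μ - μ') • u * a‖ ≤ ‖(μ - μ') • u‖ * ‖a‖ := norm_mul_le _ _
        _ = ‖μ - μ'‖ * ‖u‖ * ‖a‖ := by rw [norm_smul]
      have h2 : ‖μ - μ'‖ < (‖a‖ * ‖u‖ + 1)⁻¹ := by
        rw [mem_ball, dist_eq_norm] at hμ'
        rw [← norm_neg]; simpa [neg_sub] using hμ'
      have h3 : (0:ℝ) < ‖a‖ * ‖u‖ + 1 := by positivity
      have h4 : ‖μ - μ'‖ * ‖u‖ * ‖a‖ < 1 := by
        rcases le_or_gt (‖u‖ * ‖a‖) 0 with h | h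
        · nlinarith [norm_nonneg (μ - μ')]
        · have := (mul_lt_mul_of_pos_right h2 h : ‖μ - μ'‖ * (‖u‖ * ‖a‖) <
            (‖a‖ * ‖u‖ + 1)⁻¹ * (‖u‖ * ‖a‖))
          have h5 : (‖a‖ * ‖u‖ + 1)⁻¹ * (‖u‖ * ‖a‖) < 1 := by
            rw [inv_mul_lt_iff₀ h3]; nlinarith
          nlinarith
      linarith
    obtain ⟨s, hsA, hseq⟩ := shift_inv_mem A' hA'closed haA hc hainv hnc
    refine ⟨s, hsA, ?_⟩
    rw [show μ' • u - 1 = (μ • u - 1) - (μ - μ') • u by module]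
    exact hseq
  -- the complement part is open too
  have hTopen : IsOpen (Xᶜ \ R) := by
    rw [Metric.isOpen_iff]
    rintro μ ⟨hμX, hμR⟩
    have hd : 0 < infDist μ X := (hX.isClosed.notMem_iff_infDist_pos hXne).mp hμX
    set d := infDist μ X with hddef
    set ρ : ℝ := min (d / 2) (d / (2 * M * (‖u‖ + 1))) with hρdef
    have hρpos : 0 < ρ := by
      apply lt_min (by positivity)
      have : (0:ℝ) < 2 * M * (‖u‖ + 1) := by positivity
      positivity
    refine ⟨ρ, hρpos, fun μ' hμ' => ?_⟩
    rw [mem_ball, dist_eq_norm] at hμ'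
    have hρd : ρ ≤ d / 2 := min_le_left _ _
    have hdist : ∀ z ∈ X, d / 2 ≤ ‖μ' - z‖ := by
      intro z hz
      have h1 : d ≤ dist μ z := infDist_le_dist_of_mem hz
      have h2 : dist μ z ≤ dist μ μ' + dist μ' z := dist_triangle _ _ _
      have h3 : dist μ μ' < ρ := by rw [dist_eq_norm, ← norm_neg]; simpa [neg_sub] using hμ'
      have h4 : dist μ' z = ‖μ' - z‖ := dist_eq_norm _ _
      linarith
    constructor
    · intro hμ'X
      have := hdist μ' hμ'X
      simp at this
      linarith
    · rintro ⟨a, haA, hainv⟩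
      apply hμR
      -- bound on ‖a‖
      have hbz : ∀ z : X, ‖a z‖ ≤ 2 * M / d := by
        intro z
        have h1 := hnorm μ' a hainv z
        have h2 : ‖(z : ℂ)‖ ≤ M := hMb z z.2
        have h3 : d / 2 ≤ ‖μ' - (z : ℂ)‖ := hdist z z.2
        have h4 : ‖a z‖ * (d / 2) ≤ M := by nlinarith [norm_nonneg (a z)]
        rw [le_div_iff₀ hd]
        nlinarith [norm_nonneg (a z)]
      have hanorm : ‖a‖ ≤ 2 * M / d := by
        refine (ContinuousMap.norm_le a ?_).mpr hbz
        positivity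
      have hc : (μ' - μ) • u ∈ A' := A'.smul_mem huA _
      have hnc : ‖(μ' - μ) • u * a‖ < 1 := by
        have h1 : ‖(μ' - μ) • u * a‖ ≤ ‖μ' - μ‖ * ‖u‖ * ‖a‖ := by
          calc ‖(μ' - μ) • u * a‖ ≤ ‖(μ' - μ) • u‖ * ‖a‖ := norm_mul_le _ _
          _ = ‖μ' - μ‖ * ‖u‖ * ‖a‖ := by rw [norm_smul]
        have hρ2 : ρ ≤ d / (2 * M * (‖u‖ + 1)) := min_le_right _ _
        have h2 : ‖μ' - μ‖ < d / (2 * M * (‖u‖ + 1)) := lt_of_lt_of_le hμ' hρ2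
        have h3 : ‖μ' - μ‖ * ‖u‖ * ‖a‖ ≤ ‖μ' - μ‖ * ‖u‖ * (2 * M / d) := by
          have : (0:ℝ) ≤ ‖μ' - μ‖ * ‖u‖ := by positivity
          exact mul_le_mul_of_nonneg_left hanorm this
        have h4 : ‖μ' - μ‖ * ‖u‖ * (2 * M / d) < 1 := by
          have hMu : (0:ℝ) < 2 * M * (‖u‖ + 1) := by positivity
          have h5 : ‖μ' - μ‖ * (2 * M * (‖u‖ + 1)) < d := (lt_div_iff₀ hMu).mp h2
          have h6 : ‖μ' - μ‖ * ‖u‖ * (2 * M) < d := by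
            nlinarith [mul_nonneg (norm_nonneg (μ' - μ)) hMpos.le]
          calc ‖μ' - μ‖ * ‖u‖ * (2 * M / d) = ‖μ' - μ‖ * ‖u‖ * (2 * M) / d := by ring
          _ < 1 := (div_lt_one hd).mpr h6
        linarith
      obtain ⟨s, hsA, hseq⟩ := shift_inv_mem A' hA'closed haA hc hainv hnc
      refine ⟨s, hsA, ?_⟩
      rw [show μ • u - 1 = (μ' • u - 1) - (μ' - μ) • u by module]
      exact hseq
  -- the connected component of 0 in the complement of X
  set W : Set ℂ := connectedComponentIn Xᶜ 0 with hWdef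
  have h0W : (0 : ℂ) ∈ W := mem_connectedComponentIn h0
  have hWsub : W ⊆ Xᶜ := connectedComponentIn_subset _ _
  have hXcopen : IsOpen Xᶜ := hX.isClosed.isOpen_compl
  have hWopen : IsOpen W := hXcopen.connectedComponentIn
  -- its frontier lies in X
  have hfr : frontier W ⊆ X := by
    intro x hx
    by_contra hxX
    rw [hWopen.frontier_eq] at hx
    obtain ⟨hxcl, hxW⟩ := hx
    have hxc : x ∈ Xᶜ := hxX
    have hsx : x ∈ connectedComponentIn Xᶜ x := mem_connectedComponentIn hxc
    have hsopen : IsOpen (connectedComponentIn Xᶜ x) := hXcopen.connectedComponentIn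
    obtain ⟨y, hys, hyW⟩ := _root_.mem_closure_iff.mp hxcl _ hsopen hsx
    have hseq : connectedComponentIn Xᶜ x = W :=
      (connectedComponentIn_eq hys).trans (connectedComponentIn_eq hyW).symm
    exact hxW (hseq ▸ hsx)
  -- W is unbounded, via the maximum modulus principle
  have hWunb : ¬ IsBounded W := by
    intro hWb
    have humem : u ∈ closure {f : C(X, ℂ) | ∃ p : Polynomial ℂ, ∀ z : X, f z = p.eval (z : ℂ)} :=
      hdense u
    rw [Metric.mem_closure_iff] at humem
    obtain ⟨g, ⟨p, hgp⟩, hgd⟩ := humem (1 / (2 * M)) (by positivity)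
    have hp : ∀ z ∈ X, ‖z * p.eval z - 1‖ ≤ 1 / 2 := by
      intro z hz
      have h1 : dist (u ⟨z, hz⟩) (g ⟨z, hz⟩) ≤ dist u g := ContinuousMap.dist_apply_le_dist _
      have h2 : dist (u ⟨z, hz⟩) (g ⟨z, hz⟩) < 1 / (2 * M) := lt_of_le_of_lt h1 hgd
      have hzne : z ≠ 0 := fun h => h0 (h ▸ hz)
      have h3 : u ⟨z, hz⟩ = z⁻¹ := rfl
      have h4 : g ⟨z, hz⟩ = p.eval z := hgp ⟨z, hz⟩
      rw [h3, h4, dist_eq_norm] at h2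
      have h5 : z * p.eval z - 1 = -(z * (z⁻¹ - p.eval z)) := by
        field_simp; ring
      rw [h5, norm_neg, norm_mul]
      have h6 : ‖z‖ ≤ M := hMb z hz
      have h7 : ‖z⁻¹ - p.eval z‖ ≤ 1 / (2 * M) := h2.le
      calc ‖z‖ * ‖z⁻¹ - p.eval z‖ ≤ M * (1 / (2 * M)) := by
            apply mul_le_mul h6 h7 (norm_nonneg _) hMpos.le
      _ = 1 / 2 := by field_simp [hMpos.ne']
    have hdiff : DiffContOnCl ℂ (fun w : ℂ => w * p.eval w - 1) W :=
      ((differentiable_id.mul (Polynomial.differentiable p)).sub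
        (differentiable_const 1)).diffContOnCl
    have hmax := Complex.norm_le_of_forall_mem_frontier_norm_le hWb hdiff
      (fun w hw => hp w (hfr hw)) (subset_closure h0W)
    simp only [zero_mul, zero_sub, norm_neg, norm_one] at hmax
    norm_num at hmax
  -- hence W ⊆ R
  have hWR : W ⊆ R := by
    refine IsPreconnected.subset_left_of_subset_union hRopen hTopen
      disjoint_sdiff_self_right ?_ ⟨0, h0W, h0R⟩ (isPreconnected_connectedComponentIn)
    intro μ hμ
    by_cases h : μ ∈ R
    · exact Or.inl h
    · exact Or.inr ⟨hWsub hμ, h⟩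
  -- pick a far-away point of W
  obtain ⟨μ₀, hμ₀W, hμ₀n⟩ : ∃ μ₀ ∈ W, 2 * M + 1 ≤ ‖μ₀‖ := by
    by_contra hcon
    push_neg at hcon
    exact hWunb (isBounded_iff_forall_norm_le.mpr ⟨2 * M + 1, fun x hx => (hcon x hx).le⟩)
  obtain ⟨a, haA, hainv⟩ := hWR hμ₀W
  have hanorm : ‖a‖ ≤ M / (M + 1) := by
    refine (ContinuousMap.norm_le a (by positivity)).mpr fun z => ?_
    have h1 := hnorm μ₀ a hainv z
    have h2 : ‖(z : ℂ)‖ ≤ M := hMb z z.2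
    have h3 : M + 1 ≤ ‖μ₀ - (z : ℂ)‖ := by
      have h4 := norm_sub_norm_le μ₀ (z : ℂ)
      linarith
    rw [le_div_iff₀ (by positivity : (0:ℝ) < M + 1)]
    nlinarith [norm_nonneg (a z)]
  have halt : ‖-a‖ < 1 := by
    rw [norm_neg]
    have : M / (M + 1) < 1 := by
      rw [div_lt_one (by positivity)]; linarith
    linarith
  obtain ⟨s, hsA, hseq⟩ := geom_inv_mem A' hA'closed (neg_mem haA) halt
  -- the identity function lies in A'
  set v : C(X, ℂ) := ⟨fun z => (z : ℂ), continuous_subtype_val⟩ with hvdef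
  have hvinv : u * (μ₀ • (a * s)) = 1 := by
    rw [Algebra.smul_def] at hainv ⊢
    linear_combination s * hainv + hseq
  have heqv : μ₀ • (a * s) = v := by
    ext z
    have h1 : (u * (μ₀ • (a * s))) z = (1 : C(X, ℂ)) z := by rw [hvinv]
    simp only [ContinuousMap.mul_apply, ContinuousMap.one_apply, hudef,
      ContinuousMap.coe_mk] at h1
    rw [inv_mul_eq_one₀ (hz0 z)] at h1
    simp only [hvdef, ContinuousMap.coe_mk]
    exact h1.symm
  have hvA : v ∈ A' := heqv ▸ A'.smul_mem (mul_mem haA hsA) μ₀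
  -- A' contains the dense set of polynomials in z, hence is everything
  have hD1 : {f : C(X, ℂ) | ∃ p : Polynomial ℂ, ∀ z : X, f z = p.eval (z : ℂ)} ⊆
      (A' : Set C(X, ℂ)) := by
    rintro f ⟨p, hp⟩
    have hf : f = aeval v p := by
      ext z
      rw [hp z, heval v p z]
      rfl
    rw [hf]
    have h1 : aeval v p ∈ Algebra.adjoin ℂ ({v} : Set C(X, ℂ)) := by
      rw [Algebra.adjoin_singleton_eq_range_aeval]
      exact ⟨p, rfl⟩
    exact Algebra.adjoin_le (Set.singleton_subset_iff.mpr hvA) h1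
  have hA'univ : (A' : Set C(X, ℂ)) = univ := by
    apply eq_univ_of_univ_subset
    calc univ = closure {f : C(X, ℂ) | ∃ p : Polynomial ℂ, ∀ z : X, f z = p.eval (z : ℂ)} :=
          hdense.closure_eq.symm
    _ ⊆ closure (A' : Set C(X, ℂ)) := closure_mono hD1
    _ = (A' : Set C(X, ℂ)) := hA'closed.closure_eq
  -- conclude
  have hsub2 : ((Algebra.adjoin ℂ ({u} : Set C(X, ℂ))) : Set C(X, ℂ)) ⊆
      {f : C(X, ℂ) | ∃ p : Polynomial ℂ, ∀ z : X, f z = p.eval ((z : ℂ)⁻¹)} := by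
    intro f hf
    rw [SetLike.mem_coe, Algebra.adjoin_singleton_eq_range_aeval, AlgHom.mem_range] at hf
    obtain ⟨p, hp⟩ := hf
    refine ⟨p, fun z => ?_⟩
    rw [← hp, heval u p z]
    rfl
  rw [dense_iff_closure_eq]
  apply eq_univ_of_univ_subset
  calc univ = (A' : Set C(X, ℂ)) := hA'univ.symm
  _ = closure ((Algebra.adjoin ℂ ({u} : Set C(X, ℂ))) : Set C(X, ℂ)) :=
      Subalgebra.topologicalClosure_coe _
  _ ⊆ closure {f : C(X, ℂ) | ∃ p : Polynomial ℂ, ∀ z : X, f z = p.eval ((z : ℂ)⁻¹)} :=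
      closure_mono hsub2
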